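/- Proposition 1 for N i.i.d. samples (variance): let (Ω, μ) be a probability space, A measurable with μ(A) = α and 0 < α ≤ 1, g : Ω → ℝ square-integrable with respect to μ, and N a positive natural number. Let μ_A = μ(·|A) be the conditional probability measure of μ given A. On the product space Ω^N, define Ĝ(ω) = (α·N)⁻¹ · Σ_{i=1}^N 1_A(ω_i)·g(ω_i). Then Var_{(μ_A)^⊗N}(α·Ĝ) ≤ α · Var_{μ^⊗N}(Ĝ), where Var_ν(h) = ∫ h² dν − (∫ h dν)². -/

import Mathlib

open MeasureTheory

section helpers

variable {Ω : Type*} [MeasurableSpace Ω]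

lemma my_pi_map_eval {N : ℕ} (κ : Fin N → Measure Ω) [∀ i, IsProbabilityMeasure (κ i)]
    (i : Fin N) : (Measure.pi κ).map (Function.eval i) = κ i := by
  classical
  ext s hs
  rw [Measure.map_apply (measurable_pi_apply i) hs]
  have h1 : Function.eval i ⁻¹' s
      = Set.pi Set.univ (Function.update (fun _ : Fin N => (Set.univ : Set Ω)) i s) :=
    Set.eval_preimage
  rw [h1, Measure.pi_pi]
  have := Finset.prod_eq_single_of_mem
    (f := fun j => κ j (Function.update (fun _ : Fin N => (Set.univ : Set Ω)) i s j))
    i (Finset.mem_univ i) (fun j _ hj => by simp [Function.update_of_ne hj])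
  simpa using this

lemma my_indepFun_eval {N : ℕ} (κ : Fin N → Measure Ω) [∀ i, IsProbabilityMeasure (κ i)]
    {i j : Fin N} (hij : i ≠ j) :
    ProbabilityTheory.IndepFun (fun ω : Fin N → Ω => ω i) (fun ω : Fin N → Ω => ω j)
      (Measure.pi κ) := by
  classical
  rw [ProbabilityTheory.indepFun_iff_measure_inter_preimage_eq_mul]
  intro s t hs ht
  have hps : (Measure.pi κ) ((fun ω : Fin N → Ω => ω i) ⁻¹' s) = κ i s := by
    rw [← my_pi_map_eval κ i, Measure.map_apply (measurable_pi_apply i) hs]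
  have hpt : (Measure.pi κ) ((fun ω : Fin N → Ω => ω j) ⁻¹' t) = κ j t := by
    rw [← my_pi_map_eval κ j, Measure.map_apply (measurable_pi_apply j) ht]
  have h1 : (fun ω : Fin N → Ω => ω i) ⁻¹' s ∩ (fun ω : Fin N → Ω => ω j) ⁻¹' t
      = Set.pi Set.univ (fun k => if k = i then s else if k = j then t else Set.univ) := by
    ext x
    simp only [Set.mem_inter_iff, Set.mem_preimage, Set.mem_pi, Set.mem_univ, true_implies]
    constructor
    · rintro ⟨h1, h2⟩ k
      by_cases hk : k = i
      · subst hk; simpa using h1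
      · by_cases hk' : k = j
        · subst hk'; simp [hk]; exact h2
        · simp [hk, hk']
    · intro h
      refine ⟨by simpa using h i, ?_⟩
      have := h j
      simp [if_neg (Ne.symm hij)] at this
      exact this
  rw [h1, Measure.pi_pi, hps, hpt]
  have key : ∀ k : Fin N, κ k (if k = i then s else if k = j then t else Set.univ)
      = (if k = i then κ i s else 1) * (if k = j then κ j t else 1) := by
    intro k
    by_cases hk : k = i
    · subst hk; rw [if_pos rfl, if_pos rfl, if_neg hij, mul_one]
    · by_cases hk' : k = j
      · subst hk'; rw [if_neg hk, if_pos rfl, if_pos rfl, if_neg hk, one_mul]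
      · simp [hk, hk']
  simp_rw [key]
  rw [Finset.prod_mul_distrib, Finset.prod_ite_eq' Finset.univ i (fun _ => κ i s),
    Finset.prod_ite_eq' Finset.univ j (fun _ => κ j t)]
  simp

lemma my_cond_integral (μ : Measure Ω) (A : Set Ω) (hA : MeasurableSet A) {α : ℝ}
    (hα0 : 0 < α) (hμA : μ A = ENNReal.ofReal α) (u : Ω → ℝ) :
    ∫ x, A.indicator u x ∂(ProbabilityTheory.cond μ A)
      = α⁻¹ * ∫ x, A.indicator u x ∂μ := by
  have h1 : ((μ A)⁻¹).toReal = α⁻¹ := by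
    rw [hμA, ← ENNReal.ofReal_inv_of_pos hα0, ENNReal.toReal_ofReal (inv_nonneg.2 hα0.le)]
  rw [ProbabilityTheory.cond, integral_smul_measure, h1, integral_indicator hA,
    integral_indicator hA, Measure.restrict_restrict hA, Set.inter_self, smul_eq_mul]

lemma my_batch_mean (κ : Measure Ω) [IsProbabilityMeasure κ] {f : Ω → ℝ}
    (hfm : Measurable f) (hf : MemLp f 2 κ) (N : ℕ) :
    ∫ ω, (∑ i : Fin N, f (ω i)) ∂(Measure.pi fun _ : Fin N => κ) = N * ∫ x, f x ∂κ := by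
  have hmap : ∀ i : Fin N, (Measure.pi fun _ : Fin N => κ).map (Function.eval i) = κ :=
    fun i => my_pi_map_eval _ i
  have hF : ∀ i : Fin N, MemLp (fun ω : Fin N → Ω => f (ω i)) 2
      (Measure.pi fun _ : Fin N => κ) := by
    intro i
    have h : MemLp f 2 ((Measure.pi fun _ : Fin N => κ).map (Function.eval i)) := by
      rw [hmap]; exact hf
    exact (memLp_map_measure_iff hfm.aestronglyMeasurable
      (measurable_pi_apply i).aemeasurable).1 h
  have hint : ∀ i : Fin N, ∫ ω, f (ω i) ∂(Measure.pi fun _ : Fin N => κ) = ∫ x, f x ∂κ := by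
    intro i
    calc ∫ ω, f (ω i) ∂(Measure.pi fun _ : Fin N => κ)
        = ∫ x, f x ∂((Measure.pi fun _ : Fin N => κ).map (Function.eval i)) :=
          (integral_map (measurable_pi_apply i).aemeasurable hfm.aestronglyMeasurable).symm
      _ = ∫ x, f x ∂κ := by rw [hmap]
  rw [integral_finset_sum _ (fun i _ => (hF i).integrable one_le_two)]
  simp [hint]

lemma my_batch_variance (κ : Measure Ω) [IsProbabilityMeasure κ] {f : Ω → ℝ}
    (hfm : Measurable f) (hf : MemLp f 2 κ) (N : ℕ) :
    (∫ ω, (∑ i : Fin N, f (ω i)) ^ 2 ∂(Measure.pi fun _ : Fin N => κ))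
      - (∫ ω, (∑ i : Fin N, f (ω i)) ∂(Measure.pi fun _ : Fin N => κ)) ^ 2
    = N * ((∫ x, f x ^ 2 ∂κ) - (∫ x, f x ∂κ) ^ 2) := by
  have hmap : ∀ i : Fin N, (Measure.pi fun _ : Fin N => κ).map (Function.eval i) = κ :=
    fun i => my_pi_map_eval _ i
  set π := Measure.pi fun _ : Fin N => κ with hπ
  have hF : ∀ i : Fin N, MemLp (fun ω : Fin N → Ω => f (ω i)) 2 π := by
    intro i
    have h : MemLp f 2 (π.map (Function.eval i)) := by rw [hmap]; exact hf
    exact (memLp_map_measure_iff hfm.aestronglyMeasurable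
      (measurable_pi_apply i).aemeasurable).1 h
  have hint : ∀ i : Fin N, ∫ ω, f (ω i) ∂π = ∫ x, f x ∂κ := by
    intro i
    calc ∫ ω, f (ω i) ∂π
        = ∫ x, f x ∂(π.map (Function.eval i)) :=
          (integral_map (measurable_pi_apply i).aemeasurable hfm.aestronglyMeasurable).symm
      _ = ∫ x, f x ∂κ := by rw [hmap]
  have hint2 : ∀ i : Fin N, ∫ ω, f (ω i) ^ 2 ∂π = ∫ x, f x ^ 2 ∂κ := by
    intro i
    calc ∫ ω, f (ω i) ^ 2 ∂π
        = ∫ x, f x ^ 2 ∂(π.map (Function.eval i)) := by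
          rw [integral_map (measurable_pi_apply i).aemeasurable
            ((hfm.pow_const 2).aestronglyMeasurable)]
      _ = ∫ x, f x ^ 2 ∂κ := by rw [hmap]
  -- variance of each coordinate
  have hvar_i : ∀ i : Fin N, ProbabilityTheory.variance (fun ω : Fin N → Ω => f (ω i)) π
      = (∫ x, f x ^ 2 ∂κ) - (∫ x, f x ∂κ) ^ 2 := by
    intro i
    rw [ProbabilityTheory.variance_eq_sub (hF i)]
    have : (fun ω : Fin N → Ω => f (ω i)) ^ 2 = fun ω : Fin N → Ω => f (ω i) ^ 2 := by
      funext ω; simp [pow_two]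
    rw [this, hint, hint2]
  have hindep : Set.Pairwise ↑(Finset.univ : Finset (Fin N))
      (fun i j => ProbabilityTheory.IndepFun (fun ω : Fin N → Ω => f (ω i))
        (fun ω : Fin N → Ω => f (ω j)) π) := by
    intro i _ j _ hij
    exact (my_indepFun_eval (fun _ => κ) hij).comp hfm hfm
  have hsum := ProbabilityTheory.IndepFun.variance_sum (μ := π)
    (X := fun i (ω : Fin N → Ω) => f (ω i)) (s := Finset.univ) (fun i _ => hF i) hindep
  have hfun : (∑ i : Fin N, fun ω : Fin N → Ω => f (ω i))
      = fun ω : Fin N → Ω => ∑ i : Fin N, f (ω i) := by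
    funext ω; simp
  rw [hfun] at hsum
  have hmem : MemLp (fun ω : Fin N → Ω => ∑ i : Fin N, f (ω i)) 2 π := by
    have := memLp_finset_sum' (μ := π) Finset.univ
      (f := fun i (ω : Fin N → Ω) => f (ω i)) (fun i _ => hF i)
    rwa [hfun] at this
  have hv := ProbabilityTheory.variance_eq_sub hmem
  have hsq : (fun ω : Fin N → Ω => ∑ i : Fin N, f (ω i)) ^ 2
      = fun ω : Fin N → Ω => (∑ i : Fin N, f (ω i)) ^ 2 := by
    funext ω; simp [pow_two]
  rw [hsq] at hv
  rw [← hv, hsum]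
  simp [hvar_i]
  ring

end helpers

lemma my_algebra {a m s2 Nr I1n I2n I1m I2m : ℝ} (ha0 : 0 < a) (ha1 : a ≤ 1) (hN : 0 < Nr)
    (hn : I2n - I1n ^ 2 = Nr * (a⁻¹ * s2 - (a⁻¹ * m) ^ 2))
    (hm : I2m - I1m ^ 2 = Nr * (s2 - m ^ 2)) :
    Nr⁻¹ ^ 2 * I2n - (Nr⁻¹ * I1n) ^ 2 ≤ a * ((a * Nr)⁻¹ ^ 2 * I2m - ((a * Nr)⁻¹ * I1m) ^ 2) := by
  have ea : Nr⁻¹ ^ 2 * I2n - (Nr⁻¹ * I1n) ^ 2 = Nr⁻¹ ^ 2 * (I2n - I1n ^ 2) := by ring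
  have eb : a * ((a * Nr)⁻¹ ^ 2 * I2m - ((a * Nr)⁻¹ * I1m) ^ 2)
      = a * ((a * Nr)⁻¹ ^ 2 * (I2m - I1m ^ 2)) := by ring
  rw [ea, eb, hn, hm]
  have hNne : Nr ≠ 0 := hN.ne'
  have hane : a ≠ 0 := ha0.ne'
  have hdiff : a * ((a * Nr)⁻¹ ^ 2 * (Nr * (s2 - m ^ 2)))
      - Nr⁻¹ ^ 2 * (Nr * (a⁻¹ * s2 - (a⁻¹ * m) ^ 2))
      = Nr⁻¹ * m ^ 2 * (a⁻¹ ^ 2 - a⁻¹) := by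
    field_simp
    ring
  have h1 : (1 : ℝ) ≤ a⁻¹ := (one_le_inv₀ ha0).2 ha1
  have h2 : (0 : ℝ) ≤ a⁻¹ ^ 2 - a⁻¹ := by nlinarith
  have hnn : 0 ≤ Nr⁻¹ * m ^ 2 * (a⁻¹ ^ 2 - a⁻¹) :=
    mul_nonneg (mul_nonneg (inv_pos.2 hN).le (sq_nonneg m)) h2
  linarith

/-- Proposition 1 for `N` i.i.d. samples (variance): for a probability measure `μ`,
a measurable set `A` with `μ A = α`, `0 < α ≤ 1`, a square-integrable `g`, and the batch
estimator `Ĝ ω = (α N)⁻¹ ∑ i, 1_A(ω i) * g (ω i)` on `Ω^N`, the variance of `α * Ĝ`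
under the `N`-fold product of the conditional measure `μ(·|A)` is at most `α` times the
variance of `Ĝ` under the `N`-fold product of `μ`, where the variance of `h` under a
probability measure `ν` is `∫ h² dν - (∫ h dν)²`. -/
theorem tail_sampling_variance_reduction_batch {Ω : Type*} [MeasurableSpace Ω]
    (μ : Measure Ω) [IsProbabilityMeasure μ]
    (A : Set Ω) (hA : MeasurableSet A) (α : ℝ) (hα0 : 0 < α) (hα1 : α ≤ 1)
    (hμA : μ A = ENNReal.ofReal α)
    (g : Ω → ℝ) (hg : MemLp g 2 μ)
    (N : ℕ) (hN : 0 < N)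
    (Ghat : (Fin N → Ω) → ℝ)
    (hGhat : ∀ ω, Ghat ω = (α * (N : ℝ))⁻¹ * ∑ i, Set.indicator A g (ω i)) :
    (∫ ω, (α * Ghat ω) ^ 2 ∂(Measure.pi fun _ : Fin N => ProbabilityTheory.cond μ A))
        - (∫ ω, α * Ghat ω ∂(Measure.pi fun _ : Fin N => ProbabilityTheory.cond μ A)) ^ 2
      ≤ α * ((∫ ω, Ghat ω ^ 2 ∂(Measure.pi fun _ : Fin N => μ))
        - (∫ ω, Ghat ω ∂(Measure.pi fun _ : Fin N => μ)) ^ 2) := by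
  classical
  have hNpos : (0 : ℝ) < N := by exact_mod_cast hN
  have hα0' : α ≠ 0 := hα0.ne'
  have hμA0 : μ A ≠ 0 := by rw [hμA]; exact (ENNReal.ofReal_pos.2 hα0).ne'
  set ν := ProbabilityTheory.cond μ A with hν
  haveI : IsProbabilityMeasure ν := ProbabilityTheory.cond_isProbabilityMeasure hμA0
  -- measurable version of g
  set g' : Ω → ℝ := hg.1.mk g with hg'
  have hg'm : Measurable g' := hg.1.stronglyMeasurable_mk.measurable
  have hgg' : g =ᵐ[μ] g' := hg.1.ae_eq_mk
  set f : Ω → ℝ := A.indicator g' with hfdef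
  have hfm : Measurable f := hg'm.indicator hA
  have hfμ : MemLp f 2 μ := (hg.ae_eq hgg').indicator hA
  have hνAC : ν ≪ μ := by
    intro s hs
    have h0 : μ.restrict A s = 0 := by
      rw [Measure.restrict_apply' hA]
      exact measure_mono_null Set.inter_subset_left hs
    simp [hν, ProbabilityTheory.cond, Measure.smul_apply, h0]
  have hfν : MemLp f 2 ν := by
    rw [hν, ProbabilityTheory.cond]
    exact (hfμ.restrict A).smul_measure (ENNReal.inv_ne_top.2 hμA0)
  -- a.e. equality of indicator g with f
  have hind : A.indicator g =ᵐ[μ] f := by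
    filter_upwards [hgg'] with x hx
    simp [hfdef, Set.indicator_apply, hx]
  have hindν : A.indicator g =ᵐ[ν] f := hind.filter_mono hνAC.ae_le
  -- f^2 as indicator
  have hfsq : ∀ x, f x ^ 2 = A.indicator (fun y => g' y ^ 2) x := by
    intro x
    by_cases hx : x ∈ A <;> simp [hfdef, Set.indicator_apply, hx]
  -- integrals under ν
  have hmν : ∫ x, f x ∂ν = α⁻¹ * ∫ x, f x ∂μ := by
    have := my_cond_integral μ A hA hα0 hμA g'
    simpa [hfdef, hν] using this
  have hs2ν : ∫ x, f x ^ 2 ∂ν = α⁻¹ * ∫ x, f x ^ 2 ∂μ := by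
    have := my_cond_integral μ A hA hα0 hμA (fun y => g' y ^ 2)
    simp only [← hfsq] at this
    simpa [hν] using this
  -- a.e. equality of sums on product spaces
  have hsum : ∀ (κ : Measure Ω) [IsProbabilityMeasure κ], A.indicator g =ᵐ[κ] f →
      (fun ω : Fin N → Ω => ∑ i, A.indicator g (ω i))
        =ᵐ[Measure.pi fun _ : Fin N => κ] (fun ω => ∑ i, f (ω i)) := by
    intro κ _ hae
    have hco : ∀ i : Fin N, ∀ᵐ ω ∂(Measure.pi fun _ : Fin N => κ),
        A.indicator g (ω i) = f (ω i) := by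
      intro i
      have h : A.indicator g =ᵐ[(Measure.pi fun _ : Fin N => κ).map (Function.eval i)] f := by
        rw [my_pi_map_eval]; exact hae
      exact ae_eq_comp (measurable_pi_apply i).aemeasurable h
    have := (ae_all_iff.2 hco)
    filter_upwards [this] with ω hω
    exact Finset.sum_congr rfl fun i _ => hω i
  have hsumν := hsum ν hindν
  have hsumμ := hsum μ hind
  -- rewrite the four integrals in the goal
  have e1 : ∫ ω, α * Ghat ω ∂(Measure.pi fun _ : Fin N => ν) = (N : ℝ)⁻¹ * ∫ ω, (∑ i : Fin N, f (ω i)) ∂(Measure.pi fun _ : Fin N => ν) := by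
    rw [← integral_const_mul]
    refine integral_congr_ae ?_
    filter_upwards [hsumν] with ω hω
    rw [hGhat, hω]
    field_simp
  have e2 : ∫ ω, (α * Ghat ω) ^ 2 ∂(Measure.pi fun _ : Fin N => ν) = ((N : ℝ)⁻¹) ^ 2 * ∫ ω, (∑ i : Fin N, f (ω i)) ^ 2 ∂(Measure.pi fun _ : Fin N => ν) := by
    rw [← integral_const_mul]
    refine integral_congr_ae ?_
    filter_upwards [hsumν] with ω hω
    rw [hGhat, hω]
    field_simp
  have e3 : ∫ ω, Ghat ω ∂(Measure.pi fun _ : Fin N => μ) = (α * N)⁻¹ * ∫ ω, (∑ i : Fin N, f (ω i)) ∂(Measure.pi fun _ : Fin N => μ) := by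
    rw [← integral_const_mul]
    refine integral_congr_ae ?_
    filter_upwards [hsumμ] with ω hω
    rw [hGhat, hω]
  have e4 : ∫ ω, Ghat ω ^ 2 ∂(Measure.pi fun _ : Fin N => μ) = ((α * N)⁻¹) ^ 2 * ∫ ω, (∑ i : Fin N, f (ω i)) ^ 2 ∂(Measure.pi fun _ : Fin N => μ) := by
    rw [← integral_const_mul]
    refine integral_congr_ae ?_
    filter_upwards [hsumμ] with ω hω
    rw [hGhat, hω]
    ring
  rw [e1, e2, e3, e4]
  have hVν := my_batch_variance ν hfm hfν N
  have hVμ := my_batch_variance μ hfm hfμ N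
  rw [hs2ν, hmν] at hVν
  exact my_algebra hα0 hα1 hNpos hVν hVμ
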